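/- Let S be a topological semigroup acting non-expansively on a metric space (X,d) such that every orbit S·x of S in X is a bounded set. Then there exists a real Banach space V, equipped with a linear non-expansive action of S by continuous linear operators of norm at most 1, and an equivariant isometric embedding of (X,d) into V. -/

import Mathlib

open Bornology Metric Set
open scoped ENNReal

universe u v

/-- A non-expansive (jointly continuous) action of a topological semigroup `S`
on a metric space `X`. -/
structure NonexpAction (S : Type*) (X : Type*) [Semigroup S] [TopologicalSpace S]
    [MetricSpace X] where
  act : S → X → X
  mul_act : ∀ s t x, act (s * t) x = act s (act t x)
  nonexp : ∀ s x y, dist (act s x) (act s y) ≤ dist x y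
  cont : Continuous fun p : S × X => act p.1 p.2

namespace Stmt4Aux

variable {S : Type u} {X : Type v} [Semigroup S] [TopologicalSpace S] [MetricSpace X]
variable (π : NonexpAction S X) (p : X)

lemma lip_act (s : S) : LipschitzWith 1 (π.act s) :=
  LipschitzWith.of_dist_le_mul fun x y => by simpa using π.nonexp s x y

lemma lip_const_sub {f : X → ℝ} (hf : LipschitzWith 1 f) (a : ℝ) :
    LipschitzWith 1 fun z => a - f z := by
  refine LipschitzWith.of_dist_le_mul fun x y => ?_
  have h := hf.dist_le_mul x y
  rw [Real.dist_eq] at h ⊢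
  rw [show (a - f x) - (a - f y) = -(f x - f y) by ring, abs_neg]
  exact h

/-- The set of distances from the (extended) orbit of `x` to the basepoint `p`. -/
def phiSet (x : X) : Set ℝ := (fun z => dist z p) '' insert x (range fun s => π.act s x)

lemma phiSet_nonempty (x : X) : (phiSet π p x).Nonempty :=
  ⟨dist x p, ⟨x, mem_insert _ _, rfl⟩⟩

lemma dist_mem_phiSet (x : X) : dist x p ∈ phiSet π p x := ⟨x, mem_insert _ _, rfl⟩

lemma dist_act_mem_phiSet (s : S) (x : X) : dist (π.act s x) p ∈ phiSet π p x :=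
  ⟨π.act s x, mem_insert_of_mem _ ⟨s, rfl⟩, rfl⟩

variable (hbdd : ∀ x : X, IsBounded (range fun s => π.act s x))
include hbdd

lemma phiSet_bddAbove (x : X) : BddAbove (phiSet π p x) := by
  obtain ⟨r, hr⟩ := (Metric.isBounded_iff_subset_closedBall p).1 ((hbdd x).insert x)
  exact ⟨r, by rintro _ ⟨z, hz, rfl⟩; exact hr hz⟩

/-- A weight function dominating the orbit of each point. -/
noncomputable def phi (x : X) : ℝ := 1 + sSup (phiSet π p x)

lemma one_add_dist_le_phi (x : X) : 1 + dist x p ≤ phi π p x := by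
  have := le_csSup (phiSet_bddAbove π p hbdd x) (dist_mem_phiSet π p x)
  unfold phi; linarith

lemma one_le_phi (x : X) : 1 ≤ phi π p x := by
  have := one_add_dist_le_phi π p hbdd x
  have := dist_nonneg (x := x) (y := p)
  linarith

lemma phi_nonneg (x : X) : 0 ≤ phi π p x := by linarith [one_le_phi π p hbdd x]

lemma phi_act_le (s : S) (x : X) : phi π p (π.act s x) ≤ phi π p x := by
  have h : sSup (phiSet π p (π.act s x)) ≤ sSup (phiSet π p x) := by
    refine csSup_le (phiSet_nonempty π p _) ?_
    rintro _ ⟨z, hz, rfl⟩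
    rcases hz with rfl | ⟨t, rfl⟩
    · exact le_csSup (phiSet_bddAbove π p hbdd x) (dist_act_mem_phiSet π p s x)
    · show dist (π.act t (π.act s x)) p ≤ _
      rw [(π.mul_act t s x).symm]
      exact le_csSup (phiSet_bddAbove π p hbdd x) (dist_act_mem_phiSet π p (t * s) x)
  unfold phi; linarith

lemma phi_le_add (x y : X) : phi π p x ≤ phi π p y + dist x y := by
  have h : sSup (phiSet π p x) ≤ sSup (phiSet π p y) + dist x y := by
    refine csSup_le (phiSet_nonempty π p _) ?_
    rintro _ ⟨z, hz, rfl⟩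
    rcases hz with rfl | ⟨t, rfl⟩
    · have h1 := le_csSup (phiSet_bddAbove π p hbdd y) (dist_mem_phiSet π p y)
      have h2 := dist_triangle z p y
      rw [dist_comm p y] at h2
      calc dist z p ≤ dist y p + dist z y := by linarith [dist_triangle z y p]
        _ ≤ sSup (phiSet π p y) + dist z y := by linarith
    · have h1 := le_csSup (phiSet_bddAbove π p hbdd y) (dist_act_mem_phiSet π p t y)
      have h2 : dist (π.act t x) (π.act t y) ≤ dist x y := π.nonexp t x y
      calc dist (π.act t x) p ≤ dist (π.act t y) p + dist (π.act t x) (π.act t y) := by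
            linarith [dist_triangle (π.act t x) (π.act t y) p]
        _ ≤ sSup (phiSet π p y) + dist x y := by linarith
  unfold phi; linarith

lemma phi_lip : LipschitzWith 1 (phi π p) := by
  refine LipschitzWith.of_dist_le_mul fun x y => ?_
  rw [Real.dist_eq, NNReal.coe_one, one_mul, abs_sub_le_iff]
  constructor
  · linarith [phi_le_add π p hbdd x y]
  · have := phi_le_add π p hbdd y x
    rw [dist_comm y x] at this
    linarith

/-- The property of test functions: `1`-Lipschitz and dominated by `phi`. -/
def GProp (g : X → ℝ) : Prop := LipschitzWith 1 g ∧ ∀ z, |g z| ≤ phi π p z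

/-- The index type: all test functions, lifted to the right universe. -/
def Idx : Type (max u v) := ULift.{u} {g : X → ℝ // GProp π p g}

/-- The embedding of `X` into `ℓ^∞(Idx)`. -/
noncomputable def Phi (x : X) : lp (fun _ : Idx π p => ℝ) ∞ :=
  ⟨fun i => i.down.1 x,
    memℓp_infty ⟨phi π p x, by
      rintro _ ⟨i, rfl⟩
      simpa [Real.norm_eq_abs] using i.down.2.2 x⟩⟩

@[simp] lemma Phi_apply (x : X) (i : Idx π p) : Phi π p x i = i.down.1 x := rfl

/-- Precomposition with the action, on indices. -/
def sigma (s : S) (i : Idx π p) : Idx π p :=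
  ⟨⟨fun z => i.down.1 (π.act s z),
    by simpa [Function.comp_def] using i.down.2.1.comp (lip_act π s),
    fun z => (i.down.2.2 _).trans (phi_act_le π p hbdd s z)⟩⟩

lemma sigma_mul (s t : S) (i : Idx π p) :
    sigma π p hbdd (s * t) i = sigma π p hbdd t (sigma π p hbdd s i) := by
  apply ULift.ext
  apply Subtype.ext
  funext z
  simp [sigma, π.mul_act]

/-- The linear operator on `ℓ^∞` induced by the action. -/
noncomputable def T (s : S) :
    lp (fun _ : Idx π p => ℝ) ∞ →L[ℝ] lp (fun _ : Idx π p => ℝ) ∞ :=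
  LinearMap.mkContinuous
    { toFun := fun f =>
        ⟨fun i => f (sigma π p hbdd s i),
          memℓp_infty ⟨‖f‖, by
            rintro _ ⟨i, rfl⟩
            exact lp.norm_apply_le_norm ENNReal.top_ne_zero f _⟩⟩
      map_add' := fun f g => by
        apply lp.ext
        funext i
        show (f + g) (sigma π p hbdd s i) = _
        rw [lp.coeFn_add, Pi.add_apply]
        rfl
      map_smul' := fun c f => by
        apply lp.ext
        funext i
        show (c • f) (sigma π p hbdd s i) = _
        rw [lp.coeFn_smul, Pi.smul_apply]
        rfl }
    1 (fun f => by
      rw [one_mul]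
      exact lp.norm_le_of_forall_le (norm_nonneg f)
        (fun i => lp.norm_apply_le_norm ENNReal.top_ne_zero f _))

@[simp] lemma T_apply (s : S) (f : lp (fun _ : Idx π p => ℝ) ∞) (i : Idx π p) :
    T π p hbdd s f i = f (sigma π p hbdd s i) := rfl

lemma norm_T_le (s : S) (f : lp (fun _ : Idx π p => ℝ) ∞) :
    ‖T π p hbdd s f‖ ≤ ‖f‖ :=
  lp.norm_le_of_forall_le (norm_nonneg f)
    (fun i => lp.norm_apply_le_norm ENNReal.top_ne_zero f _)

lemma T_Phi (s : S) (x : X) : T π p hbdd s (Phi π p x) = Phi π p (π.act s x) := by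
  apply lp.ext
  funext i
  rfl

lemma T_mul (s t : S) (f : lp (fun _ : Idx π p => ℝ) ∞) :
    T π p hbdd (s * t) f = T π p hbdd s (T π p hbdd t f) := by
  apply lp.ext
  funext i
  show f (sigma π p hbdd (s * t) i) = f (sigma π p hbdd t (sigma π p hbdd s i))
  rw [sigma_mul]

lemma exists_gstar (x y : X) :
    ∃ g : X → ℝ, GProp π p g ∧ g x - g y = dist x y := by
  set a : ℝ := min (phi π p x) (dist x y) with ha
  refine ⟨fun z => max (min (phi π p z) (a - dist z x)) (-(phi π p z)), ⟨?_, ?_⟩, ?_⟩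
  · have h1 : LipschitzWith 1 fun z => min (phi π p z) (a - dist z x) := by
      have := (phi_lip π p hbdd).min (lip_const_sub (LipschitzWith.dist_left x) a)
      simpa using this
    have h2 : LipschitzWith 1 fun z => -(phi π p z) := by
      have := lip_const_sub (phi_lip π p hbdd) 0
      simpa [zero_sub] using this
    simpa using h1.max h2
  · intro z
    rw [abs_le]
    constructor
    · exact le_max_right _ _
    · refine max_le ((min_le_left _ _)) ?_
      linarith [phi_nonneg π p hbdd z]
  · have hax : 0 ≤ a := le_min (phi_nonneg π p hbdd x) dist_nonneg
    have haphix : a ≤ phi π p x := min_le_left _ _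
    have had : a ≤ dist x y := min_le_right _ _
    have hphix := one_add_dist_le_phi π p hbdd x
    have hphiy := one_add_dist_le_phi π p hbdd y
    have htri : dist x y ≤ dist x p + dist y p := by
      have := dist_triangle x p y
      rw [dist_comm p y] at this
      linarith
    have hgx : max (min (phi π p x) (a - dist x x)) (-(phi π p x)) = a := by
      rw [dist_self, sub_zero, min_eq_right haphix, max_eq_left (by linarith)]
    have hay : dist x y - phi π p y ≤ a := by
      refine le_min (by linarith) ?_
      linarith [dist_nonneg (x := y) (y := p)]
    have hgy : max (min (phi π p y) (a - dist y x)) (-(phi π p y)) = a - dist x y := by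
      rw [dist_comm y x, min_eq_right (by linarith), max_eq_left (by linarith)]
    show max (min (phi π p x) (a - dist x x)) (-(phi π p x)) -
      max (min (phi π p y) (a - dist y x)) (-(phi π p y)) = dist x y
    rw [hgx, hgy]
    ring

lemma Phi_isometry : Isometry (Phi π p) := by
  refine Isometry.of_dist_eq fun x y => ?_
  rw [dist_eq_norm]
  refine le_antisymm ?_ ?_
  · refine lp.norm_le_of_forall_le dist_nonneg fun i => ?_
    have hcoord : (Phi π p x - Phi π p y) i = i.down.1 x - i.down.1 y := by
      rw [lp.coeFn_sub, Pi.sub_apply]; rfl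
    rw [hcoord, Real.norm_eq_abs, ← Real.dist_eq]
    simpa using i.down.2.1.dist_le_mul x y
  · obtain ⟨g, hg, hgxy⟩ := exists_gstar π p hbdd x y
    have h := lp.norm_apply_le_norm ENNReal.top_ne_zero (Phi π p x - Phi π p y)
      (⟨⟨g, hg⟩⟩ : Idx π p)
    have hcoord : (Phi π p x - Phi π p y) (⟨⟨g, hg⟩⟩ : Idx π p) = g x - g y := by
      rfl
    rw [hcoord, Real.norm_eq_abs, hgxy, abs_of_nonneg dist_nonneg] at h
    exact h

end Stmt4Aux

set_option maxHeartbeats 1000000 in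
set_option synthInstance.maxHeartbeats 200000 in
open Stmt4Aux in
/-- If every orbit of a non-expansive semigroup action on a metric space is bounded, then
there is a real Banach space `V` with a jointly continuous linear non-expansive `S`-action
by continuous linear operators of norm at most `1`, and an equivariant isometric embedding
of `X` into `V`. -/
theorem stmt_4 {S : Type u} {X : Type v} [Semigroup S] [TopologicalSpace S] [ContinuousMul S]
    [MetricSpace X] (π : NonexpAction S X)
    (hbdd : ∀ x : X, IsBounded (range fun s => π.act s x)) :
    ∃ (V : Type (max u v)) (_ : NormedAddCommGroup V) (_ : NormedSpace ℝ V)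
      (_ : CompleteSpace V) (ρ : S → V →L[ℝ] V),
      (∀ s, ‖ρ s‖ ≤ 1) ∧
      (∀ s t : S, ρ (s * t) = (ρ s).comp (ρ t)) ∧
      Continuous (fun p : S × V => ρ p.1 p.2) ∧
      ∃ f : X → V, Isometry f ∧ ∀ s x, f (π.act s x) = ρ s (f x) := by
  rcases isEmpty_or_nonempty X with hX | hX
  · refine ⟨ULift.{max u v} ℝ, inferInstance, inferInstance, inferInstance,
      fun _ => 0, fun s => by simp, fun s t => by simp, ?_, fun x => isEmptyElim x,
      fun x => isEmptyElim x, fun s x => isEmptyElim x⟩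
    simpa using (continuous_const : Continuous fun _ : S × ULift.{max u v} ℝ => (0 : ULift ℝ))
  · obtain ⟨p⟩ := hX
    set L := lp (fun _ : Idx π p => ℝ) ∞ with hL
    set W : Submodule ℝ L :=
      (Submodule.span ℝ (Set.range (Phi π p))).topologicalClosure with hW
    have hWclosed : IsClosed (W : Set L) := Submodule.isClosed_topologicalClosure _
    -- the operators map the span (hence its closure) into itself
    have hspan : ∀ s : S, ∀ v ∈ Submodule.span ℝ (Set.range (Phi π p)),
        T π p hbdd s v ∈ Submodule.span ℝ (Set.range (Phi π p)) := by
      intro s v hv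
      induction hv using Submodule.span_induction with
      | mem v hv =>
        obtain ⟨x, rfl⟩ := hv
        rw [T_Phi]
        exact Submodule.subset_span ⟨π.act s x, rfl⟩
      | zero => simpa using Submodule.zero_mem _
      | add v w _ _ hv hw => rw [map_add]; exact Submodule.add_mem _ hv hw
      | smul a v _ hv => rw [map_smul]; exact Submodule.smul_mem _ a hv
    have hmaps : ∀ s : S, ∀ v : L, v ∈ W → T π p hbdd s v ∈ W := by
      intro s v hv
      have hv' : v ∈ closure (Submodule.span ℝ (Set.range (Phi π p)) : Set L) := hv
      have := map_mem_closure (T π p hbdd s).continuous hv'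
        (fun w hw => hspan s w hw)
      exact this
    refine ⟨↥W, inferInstance, inferInstance, hWclosed.completeSpace_coe,
      fun s => ((T π p hbdd s).comp W.subtypeL).codRestrict W
        (fun v => hmaps s v.1 v.2), ?_, ?_, ?_, ?_⟩
    · intro s
      refine ContinuousLinearMap.opNorm_le_bound _ zero_le_one fun v => ?_
      rw [one_mul]
      show ‖T π p hbdd s v.1‖ ≤ ‖v‖
      exact norm_T_le π p hbdd s v.1
    · intro s t
      refine ContinuousLinearMap.ext fun v => ?_
      apply Subtype.ext
      show T π p hbdd (s * t) v.1 = T π p hbdd s (T π p hbdd t v.1)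
      exact T_mul π p hbdd s t v.1
    · -- joint continuity
      rw [continuous_induced_rng]
      show Continuous fun q : S × ↥W => T π p hbdd q.1 q.2.1
      refine continuous_iff_continuousAt.2 fun q₀ => ?_
      obtain ⟨s₀, v₀⟩ := q₀
      rw [ContinuousAt, Metric.tendsto_nhds]
      intro ε hε
      have hv₀ : (v₀ : L) ∈ closure (Submodule.span ℝ (Set.range (Phi π p)) : Set L) := v₀.2
      obtain ⟨w, hwmem, hw⟩ := Metric.mem_closure_iff.1 hv₀ (ε / 4) (by positivity)
      -- continuity of s ↦ T s w for w in the span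
      have hcw : Continuous fun s : S => T π p hbdd s w := by
        clear hw hε hv₀
        induction hwmem using Submodule.span_induction with
        | mem w hw =>
          obtain ⟨x, rfl⟩ := hw
          have : (fun s : S => T π p hbdd s (Phi π p x)) =
              fun s => Phi π p (π.act s x) := by
            funext s; exact T_Phi π p hbdd s x
          rw [this]
          exact (Phi_isometry π p hbdd).continuous.comp
            (π.cont.comp (continuous_id.prodMk continuous_const))
        | zero => simpa using (continuous_const : Continuous fun _ : S => (0 : L))
        | add v w _ _ hv hw =>
          have : (fun s : S => T π p hbdd s (v + w)) =
              fun s => T π p hbdd s v + T π p hbdd s w := by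
            funext s; rw [map_add]
          rw [this]; exact hv.add hw
        | smul a v _ hv =>
          have : (fun s : S => T π p hbdd s (a • v)) =
              fun s => a • T π p hbdd s v := by
            funext s; rw [map_smul]
          rw [this]; exact hv.const_smul a
      have h1 : ∀ᶠ s in nhds s₀, dist (T π p hbdd s w) (T π p hbdd s₀ w) < ε / 4 :=
        Metric.tendsto_nhds.1 (hcw.tendsto s₀) (ε / 4) (by positivity)
      have h2 : ∀ᶠ v : ↥W in nhds v₀, dist v v₀ < ε / 4 := by
        filter_upwards [Metric.ball_mem_nhds v₀ (show (0 : ℝ) < ε / 4 by positivity)] with v hv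
        exact Metric.mem_ball.1 hv
      filter_upwards [h1.prod_nhds h2]
      rintro ⟨s, v⟩ ⟨hs, hv⟩
      have key1 : dist (T π p hbdd s v.1) (T π p hbdd s w) < ε / 4 + ε / 4 := by
        rw [dist_eq_norm, ← map_sub]
        calc ‖T π p hbdd s (v.1 - w)‖ ≤ ‖(v.1 : L) - w‖ := norm_T_le π p hbdd s _
          _ = dist (v.1 : L) w := (dist_eq_norm _ _).symm
          _ ≤ dist (v.1 : L) (v₀ : L) + dist (v₀ : L) w := dist_triangle _ _ _
          _ < ε / 4 + ε / 4 := by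
            have hvv : dist (v.1 : L) (v₀ : L) = dist v v₀ := rfl
            rw [hvv]
            exact add_lt_add hv hw
      have key3 : dist (T π p hbdd s₀ w) (T π p hbdd s₀ v₀.1) < ε / 4 := by
        rw [dist_eq_norm, ← map_sub]
        calc ‖T π p hbdd s₀ (w - v₀.1)‖ ≤ ‖w - (v₀.1 : L)‖ := norm_T_le π p hbdd s₀ _
          _ = dist w (v₀.1 : L) := (dist_eq_norm _ _).symm
          _ = dist (v₀.1 : L) w := dist_comm _ _
          _ < ε / 4 := hw
      calc dist (T π p hbdd s v.1) (T π p hbdd s₀ v₀.1)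
          ≤ dist (T π p hbdd s v.1) (T π p hbdd s w) +
            dist (T π p hbdd s w) (T π p hbdd s₀ w) +
            dist (T π p hbdd s₀ w) (T π p hbdd s₀ v₀.1) := dist_triangle4 _ _ _ _
        _ < (ε / 4 + ε / 4) + ε / 4 + ε / 4 := by
            exact add_lt_add (add_lt_add key1 hs) key3
        _ = ε := by ring
    · -- the embedding
      have hmem : ∀ x : X, Phi π p x ∈ W :=
        fun x => Submodule.le_topologicalClosure _ (Submodule.subset_span ⟨x, rfl⟩)
      refine ⟨fun x => ⟨Phi π p x, hmem x⟩, ?_, ?_⟩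
      · refine Isometry.of_dist_eq fun x y => ?_
        calc dist (⟨Phi π p x, hmem x⟩ : ↥W) ⟨Phi π p y, hmem y⟩
            = ‖(⟨Phi π p x, hmem x⟩ : ↥W) - ⟨Phi π p y, hmem y⟩‖ := dist_eq_norm _ _
          _ = ‖Phi π p x - Phi π p y‖ := by rw [Submodule.coe_norm]; rfl
          _ = dist (Phi π p x) (Phi π p y) := (dist_eq_norm _ _).symm
          _ = dist x y := (Phi_isometry π p hbdd).dist_eq x y
      · intro s x
        apply Subtype.ext
        show Phi π p (π.act s x) = T π p hbdd s (Phi π p x)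
        exact (T_Phi π p hbdd s x).symm
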